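/- Let p > 1. There exist constants c, C > 0 depending only on p such that for all δ ≥ 0, all d ≥ 1 and all real d×d matrices P, Q: c·φ_{|P^sym|}(|P^sym−Q^sym|) ≤ |F(P)−F(Q)|² ≤ C·φ_{|P^sym|}(|P^sym−Q^sym|), where φ_a(t) = ∫₀^t (δ+a+s)^{p−2}·s ds is the shifted function with shift a = |P^sym|. -/

import Mathlib

open Matrix

/-- Symmetric part `P^sym = (P + Pᵀ)/2` of a square matrix. -/
noncomputable def msym {d : ℕ} (P : Matrix (Fin d) (Fin d) ℝ) : Matrix (Fin d) (Fin d) ℝ :=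
  (2⁻¹ : ℝ) • (P + Pᵀ)

/-- Frobenius inner product `A:B = ∑ᵢⱼ Aᵢⱼ Bᵢⱼ`. -/
noncomputable def mdot {d : ℕ} (A B : Matrix (Fin d) (Fin d) ℝ) : ℝ :=
  ∑ i, ∑ j, A i j * B i j

/-- Frobenius norm `|A| = (A:A)^(1/2)`. -/
noncomputable def mnorm {d : ℕ} (A : Matrix (Fin d) (Fin d) ℝ) : ℝ :=
  Real.sqrt (mdot A A)

/-- Stress tensor `S(P) = (δ + |P^sym|)^(p-2) • P^sym` (real power, `0^r = 0` for `r < 0`). -/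
noncomputable def Smap (p δ : ℝ) {d : ℕ} (P : Matrix (Fin d) (Fin d) ℝ) :
    Matrix (Fin d) (Fin d) ℝ :=
  ((δ + mnorm (msym P)) ^ (p - 2)) • msym P

/-- Associated function `F(P) = (δ + |P^sym|)^((p-2)/2) • P^sym`. -/
noncomputable def Fmap (p δ : ℝ) {d : ℕ} (P : Matrix (Fin d) (Fin d) ℝ) :
    Matrix (Fin d) (Fin d) ℝ :=
  ((δ + mnorm (msym P)) ^ ((p - 2) / 2)) • msym P


open intervalIntegral


/-- Comparison of rpow under two-sided multiplicative bounds. -/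
lemma rpow_comp {u v M : ℝ} (r : ℝ) (hu : 0 < u) (hv : 0 < v) (hM : 1 ≤ M)
    (h1 : v ≤ M * u) (h2 : u ≤ M * v) : v ^ r ≤ M ^ |r| * u ^ r := by
  have hM0 : 0 < M := lt_of_lt_of_le one_pos hM
  rcases le_or_gt 0 r with hr | hr
  · rw [abs_of_nonneg hr]
    calc v ^ r ≤ (M * u) ^ r := Real.rpow_le_rpow hv.le h1 hr
      _ = M ^ r * u ^ r := Real.mul_rpow hM0.le hu.le
  · rw [abs_of_neg hr]
    have h3 : u / M ≤ v := by rw [div_le_iff₀ hM0]; linarith [h2, mul_comm v M]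
    calc v ^ r ≤ (u / M) ^ r :=
          Real.rpow_le_rpow_of_nonpos (by positivity) h3 hr.le
      _ = M ^ (-r) * u ^ r := by
          rw [Real.div_rpow hu.le hM0.le, Real.rpow_neg hM0.le]
          field_simp

/-- Mean value estimate for `f(t) = (δ+t)^((p-2)/2) t` on `[b,a]` with `a/2 ≤ b < a`. -/
lemma slope_bound {p : ℝ} (hp : 1 < p) {δ a b : ℝ} (hδ : 0 ≤ δ) (hb : 0 < b)
    (hba : b < a) (h2 : a ≤ 2 * b) :
    ∃ m : ℝ,
      min 1 (p / 2) * (2 ^ (-|(p - 2) / 2|) * (δ + a) ^ ((p - 2) / 2)) ≤ m ∧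
      m ≤ max 1 (p / 2) * (2 ^ |(p - 2) / 2| * (δ + a) ^ ((p - 2) / 2)) ∧
      (δ + a) ^ ((p - 2) / 2) * a - (δ + b) ^ ((p - 2) / 2) * b = m * (a - b) := by
  set q : ℝ := (p - 2) / 2 with hq
  set f : ℝ → ℝ := fun t => (δ + t) ^ q * t with hf
  set f' : ℝ → ℝ := fun t => q * (δ + t) ^ (q - 1) * 1 * t + (δ + t) ^ q * 1 with hf'
  have hderiv : ∀ t ∈ Set.Icc b a, HasDerivAt f (f' t) t := by
    intro t ht
    have hdt : 0 < δ + t := by have := ht.1; linarith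
    have h1 : HasDerivAt (fun s : ℝ => δ + s) 1 t := by
      simpa using (hasDerivAt_id t).const_add δ
    have h2 : HasDerivAt (fun s : ℝ => (δ + s) ^ q) (q * (δ + t) ^ (q - 1) * 1) t := by
      exact (Real.hasDerivAt_rpow_const (Or.inl hdt.ne')).comp t h1
    exact h2.mul (hasDerivAt_id' t)
  have hcont : ContinuousOn f (Set.Icc b a) := fun t ht =>
    (hderiv t ht).continuousAt.continuousWithinAt
  obtain ⟨ξ, hξ, hslope⟩ := exists_hasDerivAt_eq_slope f f' hba hcont
    (fun t ht => hderiv t ⟨ht.1.le, ht.2.le⟩)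
  refine ⟨f' ξ, ?_, ?_, ?_⟩
  rotate_right
  · rw [hslope, div_mul_cancel₀ _ (sub_ne_zero.mpr hba.ne')]
  all_goals {
    have hξb := hξ.1; have hξa := hξ.2
    have hx : 0 < δ + ξ := by linarith
    have hda : 0 < δ + a := by linarith
    have hfx : f' ξ = (δ + ξ) ^ (q - 1) * (δ + (1 + q) * ξ) := by
      have hxq : (δ + ξ) ^ q = (δ + ξ) ^ (q - 1) * (δ + ξ) := by
        rw [← Real.rpow_add_one hx.ne' (q - 1)]; norm_num
      simp only [f', mul_one]
      rw [hxq]; ring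
    have hq1 : 1 + q = p / 2 := by rw [hq]; ring
    have hxq1 : (0:ℝ) ≤ (δ + ξ) ^ (q - 1) := Real.rpow_nonneg hx.le _
    have hxqx : (δ + ξ) ^ (q - 1) * (δ + ξ) = (δ + ξ) ^ q := by
      rw [← Real.rpow_add_one hx.ne' (q - 1)]; norm_num
    -- x^q vs (δ+a)^q within factor 2^|q|
    have hc1 : (δ + a) ^ q ≤ 2 ^ |q| * (δ + ξ) ^ q :=
      rpow_comp q hx hda (by norm_num) (by linarith) (by linarith)
    have hc2 : (δ + ξ) ^ q ≤ 2 ^ |q| * (δ + a) ^ q :=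
      rpow_comp q hda hx (by norm_num) (by linarith) (by linarith)
    have h2q : (0:ℝ) < 2 ^ |q| := Real.rpow_pos_of_pos (by norm_num) _
    have h2q' : (0:ℝ) < 2 ^ (-|q|) := Real.rpow_pos_of_pos (by norm_num) _
    have h2qq : (2:ℝ) ^ (-|q|) * 2 ^ |q| = 1 := by
      rw [← Real.rpow_add (by norm_num)]; norm_num
    first
    | -- lower bound
      ( have hlow : min 1 (p / 2) * (δ + ξ) ≤ δ + (1 + q) * ξ := by
          rcases min_cases 1 (p / 2) with ⟨hm, hm'⟩ | ⟨hm, hm'⟩ <;>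
            rw [hm, hq1] <;> nlinarith
        have hmin : (0:ℝ) < min 1 (p / 2) := by
          rcases min_cases 1 (p / 2) with ⟨hm, _⟩ | ⟨hm, _⟩ <;> rw [hm] <;> linarith
        have step1 : min 1 (p / 2) * (δ + ξ) ^ q ≤ f' ξ := by
          rw [hfx, ← hxqx]
          calc min 1 (p/2) * ((δ + ξ) ^ (q-1) * (δ + ξ))
              = (δ + ξ) ^ (q-1) * (min 1 (p/2) * (δ + ξ)) := by ring
            _ ≤ (δ + ξ) ^ (q-1) * (δ + (1 + q) * ξ) :=
                mul_le_mul_of_nonneg_left hlow hxq1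
        -- (δ+a)^q ≤ 2^|q| x^q  ⇒  2^{-|q|}(δ+a)^q ≤ x^q
        have step2 : 2 ^ (-|q|) * (δ + a) ^ q ≤ (δ + ξ) ^ q := by
          calc 2 ^ (-|q|) * (δ + a) ^ q ≤ 2 ^ (-|q|) * (2 ^ |q| * (δ + ξ) ^ q) :=
                mul_le_mul_of_nonneg_left hc1 h2q'.le
            _ = (2 ^ (-|q|) * 2 ^ |q|) * (δ + ξ) ^ q := by ring
            _ = (δ + ξ) ^ q := by rw [h2qq]; ring
        calc min 1 (p / 2) * (2 ^ (-|q|) * (δ + a) ^ q)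
            ≤ min 1 (p / 2) * (δ + ξ) ^ q := mul_le_mul_of_nonneg_left step2 hmin.le
          _ ≤ f' ξ := step1 )
    | -- upper bound
      ( have hup : δ + (1 + q) * ξ ≤ max 1 (p / 2) * (δ + ξ) := by
          rcases max_cases 1 (p / 2) with ⟨hm, hm'⟩ | ⟨hm, hm'⟩ <;>
            rw [hm, hq1] <;> nlinarith
        have hmax : (0:ℝ) < max 1 (p / 2) := lt_of_lt_of_le one_pos (le_max_left _ _)
        have step1 : f' ξ ≤ max 1 (p / 2) * (δ + ξ) ^ q := by
          rw [hfx, ← hxqx]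
          calc (δ + ξ) ^ (q-1) * (δ + (1 + q) * ξ)
              ≤ (δ + ξ) ^ (q-1) * (max 1 (p/2) * (δ + ξ)) :=
                mul_le_mul_of_nonneg_left hup hxq1
            _ = max 1 (p/2) * ((δ + ξ) ^ (q-1) * (δ + ξ)) := by ring
        calc f' ξ ≤ max 1 (p / 2) * (δ + ξ) ^ q := step1
          _ ≤ max 1 (p / 2) * (2 ^ |q| * (δ + a) ^ q) :=
              mul_le_mul_of_nonneg_left hc2 hmax.le )
  }

/-- If `b ≤ a/2` then `f(b) ≤ θ f(a)` for `f(t) = (δ+t)^((p-2)/2) t`. -/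
lemma f_small {p : ℝ} (hp : 1 < p) {δ a b : ℝ} (hδ : 0 ≤ δ) (hb : 0 ≤ b)
    (hba : 2 * b ≤ a) :
    (δ + b) ^ ((p - 2) / 2) * b ≤
      max (1 / 2) (2 ^ (-(p / 2))) * ((δ + a) ^ ((p - 2) / 2) * a) := by
  set q : ℝ := (p - 2) / 2 with hq
  have ha : 0 ≤ a := by linarith
  rcases le_or_gt 0 q with hq0 | hq0
  · -- q ≥ 0 : f(b) ≤ (1/2) f(a)
    have h1 : (δ + b) ^ q ≤ (δ + a) ^ q :=
      Real.rpow_le_rpow (by linarith) (by linarith) hq0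
    have h2 : (δ + b) ^ q * b ≤ (δ + a) ^ q * (a / 2) := by
      apply mul_le_mul h1 (by linarith) hb (Real.rpow_nonneg (by linarith) _)
    have h3 : (0:ℝ) ≤ (δ + a) ^ q * a := by positivity
    have h4 : (1/2 : ℝ) ≤ max (1/2) (2 ^ (-(p/2))) := le_max_left _ _
    nlinarith [h3]
  · -- q < 0
    rcases eq_or_lt_of_le hb with hb0 | hb0
    · rw [← hb0]
      have : (0:ℝ) ≤ max (1/2) (2 ^ (-(p/2))) * ((δ + a) ^ q * a) := by positivity
      simpa using this
    · have ha0 : 0 < a := by linarith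
      have hdb : 0 < δ + b := by linarith
      have hda : 0 < δ + a := by linarith
      have hab2 : (2:ℝ) ≤ a / b := by rw [le_div_iff₀ hb0]; linarith
      have h1 : δ + a ≤ (a / b) * (δ + b) := by
        rw [div_mul_eq_mul_div, le_div_iff₀ hb0]; nlinarith
      have h2 : ((a / b) * (δ + b)) ^ q ≤ (δ + a) ^ q :=
        Real.rpow_le_rpow_of_nonpos hda h1 hq0.le
      have h3 : ((a / b) * (δ + b)) ^ q = (a / b) ^ q * (δ + b) ^ q :=
        Real.mul_rpow (by positivity) hdb.le
      -- (δ+a)^q * a ≥ (a/b)^q (δ+b)^q * a = (a/b)^(q+1) * ((δ+b)^q * b)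
      have h4 : (a / b) ^ q * (δ + b) ^ q * a = (a / b) ^ (q + 1) * ((δ + b) ^ q * b) := by
        rw [Real.rpow_add_one (by positivity : (a/b) ≠ 0)]
        field_simp
      have h5 : (2:ℝ) ^ (q + 1) ≤ (a / b) ^ (q + 1) :=
        Real.rpow_le_rpow (by norm_num) hab2 (by rw [hq]; linarith)
      have h6 : (2:ℝ) ^ (q + 1) * ((δ + b) ^ q * b) ≤ (δ + a) ^ q * a := by
        calc (2:ℝ) ^ (q + 1) * ((δ + b) ^ q * b)
            ≤ (a / b) ^ (q + 1) * ((δ + b) ^ q * b) := by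
              apply mul_le_mul_of_nonneg_right h5 (by positivity)
          _ = (a / b) ^ q * (δ + b) ^ q * a := h4.symm
          _ = ((a / b) * (δ + b)) ^ q * a := by rw [h3]
          _ ≤ (δ + a) ^ q * a := mul_le_mul_of_nonneg_right h2 ha0.le
      have h7 : (2:ℝ) ^ (-(p/2)) * ((2:ℝ) ^ (q+1)) = 1 := by
        rw [← Real.rpow_add (by norm_num)]
        have : -(p/2) + (q+1) = 0 := by rw [hq]; ring
        rw [this, Real.rpow_zero]
      have h8 : (δ + b) ^ q * b ≤ 2 ^ (-(p/2)) * ((δ + a) ^ q * a) := by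
        have hpos : (0:ℝ) < 2 ^ (-(p/2)) := Real.rpow_pos_of_pos (by norm_num) _
        calc (δ + b) ^ q * b
            = (2 ^ (-(p/2)) * (2:ℝ) ^ (q+1)) * ((δ + b) ^ q * b) := by rw [h7]; ring
          _ = 2 ^ (-(p/2)) * ((2:ℝ) ^ (q+1) * ((δ + b) ^ q * b)) := by ring
          _ ≤ 2 ^ (-(p/2)) * ((δ + a) ^ q * a) := mul_le_mul_of_nonneg_left h6 hpos.le
      have h9 : (2:ℝ) ^ (-(p/2)) ≤ max (1/2) (2 ^ (-(p/2))) := le_max_right _ _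
      have h10 : (0:ℝ) ≤ (δ + a) ^ q * a := by positivity
      nlinarith

lemma rpow_sq {x : ℝ} (hx : 0 ≤ x) (y : ℝ) : (x ^ y) ^ 2 = x ^ (2 * y) := by
  rw [← Real.rpow_two, ← Real.rpow_mul hx, mul_comm]

lemma combine_low {c1 c2 c K u v S X : ℝ} (hc1 : c ≤ c1) (hc2 : c ≤ c2) (hc : 0 ≤ c)
    (hK : 0 ≤ K) (hu : 0 ≤ u) (hv : 0 ≤ v) (h1 : c1 * (K * u) ≤ S) (h2 : c2 * K ≤ X) :
    c * (K * (u + 2 * v)) ≤ S + 2 * (X * v) := by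
  have A1 : c * (K * u) ≤ c1 * (K * u) :=
    mul_le_mul_of_nonneg_right hc1 (mul_nonneg hK hu)
  have A2 : c * (K * v) ≤ c2 * (K * v) :=
    mul_le_mul_of_nonneg_right hc2 (mul_nonneg hK hv)
  have A3 : c2 * K * v ≤ X * v := mul_le_mul_of_nonneg_right h2 hv
  nlinarith [A1, A2, A3]

lemma combine_up {C1 C2 C K u v S X : ℝ} (hc1 : C1 ≤ C) (hc2 : C2 ≤ C) (hC : 0 ≤ C1)
    (hC2 : 0 ≤ C2) (hK : 0 ≤ K) (hu : 0 ≤ u) (hv : 0 ≤ v)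
    (h1 : S ≤ C1 * (K * u)) (h2 : X ≤ C2 * K) :
    S + 2 * (X * v) ≤ C * (K * (u + 2 * v)) := by
  have A1 : C1 * (K * u) ≤ C * (K * u) :=
    mul_le_mul_of_nonneg_right hc1 (mul_nonneg hK hu)
  have A2 : C2 * (K * v) ≤ C * (K * v) :=
    mul_le_mul_of_nonneg_right hc2 (mul_nonneg hK hv)
  have A3 : X * v ≤ C2 * K * v := mul_le_mul_of_nonneg_right h2 hv
  nlinarith [A1, A2, A3]
set_option maxHeartbeats 1000000 in
lemma core_wlog (p : ℝ) (hp : 1 < p) :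
    ∃ c : ℝ, 0 < c ∧ ∃ C : ℝ, 0 < C ∧
      ∀ δ a b e : ℝ, 0 ≤ δ → 0 ≤ b → b ≤ a → |e| ≤ a * b →
        c * ((δ + a + b) ^ (p - 2) * (a ^ 2 + b ^ 2 - 2 * e)) ≤
          ((δ + a) ^ ((p - 2) / 2)) ^ 2 * a ^ 2
            - 2 * ((δ + a) ^ ((p - 2) / 2) * (δ + b) ^ ((p - 2) / 2)) * e
            + ((δ + b) ^ ((p - 2) / 2)) ^ 2 * b ^ 2 ∧
        ((δ + a) ^ ((p - 2) / 2)) ^ 2 * a ^ 2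
            - 2 * ((δ + a) ^ ((p - 2) / 2) * (δ + b) ^ ((p - 2) / 2)) * e
            + ((δ + b) ^ ((p - 2) / 2)) ^ 2 * b ^ 2
          ≤ C * ((δ + a + b) ^ (p - 2) * (a ^ 2 + b ^ 2 - 2 * e)) := by
  set q : ℝ := (p - 2) / 2 with hqdef
  set e2q : ℝ := 2 ^ |q| with he2q
  set e8q : ℝ := 8 ^ |q| with he8q
  set e2r : ℝ := 2 ^ |p - 2| with he2r
  set cmin : ℝ := min 1 (p / 2) with hcmin
  set cmax : ℝ := max 1 (p / 2) with hcmax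
  set θ : ℝ := max (1 / 2) (2 ^ (-(p / 2))) with hθdef
  have h2q0 : (0:ℝ) < e2q := Real.rpow_pos_of_pos (by norm_num) _
  have h8q0 : (0:ℝ) < e8q := Real.rpow_pos_of_pos (by norm_num) _
  have h2r0 : (0:ℝ) < e2r := Real.rpow_pos_of_pos (by norm_num) _
  have hcmin0 : (0:ℝ) < cmin := lt_min one_pos (by linarith)
  have hcmax0 : (0:ℝ) < cmax := lt_of_lt_of_le one_pos (le_max_left _ _)
  have hθ0 : (0:ℝ) < θ := lt_of_lt_of_le (by norm_num) (le_max_left _ _)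
  have hθ1 : θ < 1 := by
    apply max_lt (by norm_num)
    exact Real.rpow_lt_one_of_one_lt_of_neg (by norm_num) (by linarith)
  have h2qe : (2:ℝ) ^ (-|q|) = e2q⁻¹ := by
    rw [he2q, ← Real.rpow_neg (by norm_num)]
  set c1 : ℝ := min (cmin ^ 2 * (e2q⁻¹) ^ 2 * e2r⁻¹) e8q⁻¹ with hc1def
  set C1 : ℝ := max (cmax ^ 2 * e2q ^ 2 * e2r) e8q with hC1def
  set c2 : ℝ := (1 - θ) ^ 2 * (4 / 9) * e2r⁻¹ with hc2def
  set C2 : ℝ := 16 * e2r with hC2def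
  have hc10 : 0 < c1 := lt_min (by positivity) (by positivity)
  have hC10 : 0 < C1 := lt_of_lt_of_le h8q0 (le_max_right _ _)
  have hc20 : 0 < c2 := by
    have : 0 < 1 - θ := by linarith
    positivity
  have hC20 : 0 < C2 := by positivity
  refine ⟨min c1 c2, lt_min hc10 hc20, max C1 C2, lt_of_lt_of_le hC10 (le_max_left _ _),
    fun δ a b e hδ hb hba he => ?_⟩
  have ha : 0 ≤ a := hb.trans hba
  obtain ⟨he2, he1⟩ := abs_le.mp he
  rcases eq_or_lt_of_le ha with ha0 | ha0
  · -- a = 0, hence b = 0, e = 0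
    have hb0 : b = 0 := le_antisymm (by linarith [hba, ha0]) hb
    have he0 : e = 0 := by
      have h1 : |e| ≤ 0 := by rw [← ha0, hb0] at he; simpa using he
      have := abs_nonneg e
      have : |e| = 0 := le_antisymm h1 this
      exact abs_eq_zero.mp this
    rw [← ha0, hb0, he0]
    norm_num
  -- a > 0
  have hda : 0 < δ + a := by linarith
  have hK0 : 0 ≤ (δ + a + b) ^ (p - 2) := Real.rpow_nonneg (by linarith) _
  have hsqA : ((δ + a) ^ q) ^ 2 = (δ + a) ^ (p - 2) := by
    rw [rpow_sq hda.le]; congr 1; rw [hqdef]; ring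
  have hKcmp1 : (δ + a + b) ^ (p - 2) ≤ e2r * (δ + a) ^ (p - 2) :=
    rpow_comp (p - 2) hda (by linarith) (by norm_num) (by linarith) (by linarith)
  have hKcmp2 : (δ + a) ^ (p - 2) ≤ e2r * (δ + a + b) ^ (p - 2) :=
    rpow_comp (p - 2) (by linarith : (0:ℝ) < δ + a + b) hda (by norm_num)
      (by linarith) (by linarith)
  rcases le_or_gt (2 * b) a with hcase | hcase
  · -- CASE 2 : b ≤ a/2
    set fa : ℝ := (δ + a) ^ q * a with hfa
    set fb : ℝ := (δ + b) ^ q * b with hfb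
    have hfa0 : 0 ≤ fa := by positivity
    have hfb0 : 0 ≤ fb := by positivity
    have hsmall : fb ≤ θ * fa := f_small hp hδ hb hcase
    have hAB0 : 0 ≤ (δ + a) ^ q * (δ + b) ^ q := by positivity
    have hXe : (δ + a) ^ q * (δ + b) ^ q * e ≤ fa * fb := by
      have h1 : (δ + a) ^ q * (δ + b) ^ q * e ≤ (δ + a) ^ q * (δ + b) ^ q * (a * b) :=
        mul_le_mul_of_nonneg_left he1 hAB0
      calc (δ + a) ^ q * (δ + b) ^ q * e ≤ (δ + a) ^ q * (δ + b) ^ q * (a * b) := h1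
        _ = fa * fb := by rw [hfa, hfb]; ring
    have hXe' : -(fa * fb) ≤ (δ + a) ^ q * (δ + b) ^ q * e := by
      have h1 : (δ + a) ^ q * (δ + b) ^ q * (-(a * b)) ≤ (δ + a) ^ q * (δ + b) ^ q * e :=
        mul_le_mul_of_nonneg_left he2 hAB0
      calc -(fa * fb) = (δ + a) ^ q * (δ + b) ^ q * (-(a * b)) := by rw [hfa, hfb]; ring
        _ ≤ _ := h1
    -- D bounds in terms of fa
    have hDlow : (1 - θ) ^ 2 * fa ^ 2 ≤
        ((δ + a) ^ q) ^ 2 * a ^ 2 - 2 * ((δ + a) ^ q * (δ + b) ^ q) * e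
          + ((δ + b) ^ q) ^ 2 * b ^ 2 := by
      have h1 : (1 - θ) * fa ≤ fa - fb := by linarith [hsmall]
      have h2 : 0 ≤ (1 - θ) * fa := mul_nonneg (by linarith) hfa0
      have h3 : ((1 - θ) * fa) ^ 2 ≤ (fa - fb) ^ 2 := pow_le_pow_left₀ h2 h1 2
      have h4 : (fa - fb) ^ 2 = fa ^ 2 - 2 * (fa * fb) + fb ^ 2 := by ring
      have h5 : fa ^ 2 = ((δ + a) ^ q) ^ 2 * a ^ 2 := by rw [hfa]; ring
      have h6 : fb ^ 2 = ((δ + b) ^ q) ^ 2 * b ^ 2 := by rw [hfb]; ring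
      linarith [hXe, h3]
    have hDup : ((δ + a) ^ q) ^ 2 * a ^ 2 - 2 * ((δ + a) ^ q * (δ + b) ^ q) * e
          + ((δ + b) ^ q) ^ 2 * b ^ 2 ≤ 4 * fa ^ 2 := by
      have h1 : fa + fb ≤ 2 * fa := by
        have h0 : θ * fa ≤ 1 * fa := mul_le_mul_of_nonneg_right hθ1.le hfa0
        linarith [hsmall]
      have h3 : (fa + fb) ^ 2 ≤ (2 * fa) ^ 2 :=
        pow_le_pow_left₀ (add_nonneg hfa0 hfb0) h1 2
      have h4 : (fa + fb) ^ 2 = fa ^ 2 + 2 * (fa * fb) + fb ^ 2 := by ring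
      have h5 : fa ^ 2 = ((δ + a) ^ q) ^ 2 * a ^ 2 := by rw [hfa]; ring
      have h6 : fb ^ 2 = ((δ + b) ^ q) ^ 2 * b ^ 2 := by rw [hfb]; ring
      linarith [hXe', h3]
    -- N bounds
    have hNlow : a ^ 2 / 4 ≤ a ^ 2 + b ^ 2 - 2 * e := by
      have hprod : 0 ≤ (a - 2*b) * (3*a - 2*b) :=
        mul_nonneg (by linarith) (by linarith)
      linarith [he1, hprod]
    have hNup : a ^ 2 + b ^ 2 - 2 * e ≤ 9 / 4 * a ^ 2 := by
      have hprod : 0 ≤ (a - 2*b) * (5*a + 2*b) :=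
        mul_nonneg (by linarith) (by linarith)
      linarith [he2, hprod]
    have hfa2 : fa ^ 2 = (δ + a) ^ (p - 2) * a ^ 2 := by
      rw [hfa, mul_pow, hsqA]
    constructor
    · -- lower
      have key : c2 * ((δ + a + b) ^ (p - 2) * (a ^ 2 + b ^ 2 - 2 * e)) ≤
          (1 - θ) ^ 2 * fa ^ 2 := by
        rw [hfa2, hc2def]
        have s1 : (δ + a + b) ^ (p - 2) * (a ^ 2 + b ^ 2 - 2 * e) ≤
            (e2r * (δ + a) ^ (p - 2)) * (9 / 4 * a ^ 2) := by
          apply mul_le_mul hKcmp1 hNup (by linarith [he1, sq_nonneg (a - b)]) (by positivity)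
        have h1θ : (0:ℝ) < (1 - θ) ^ 2 := by
          have : 0 < 1 - θ := by linarith
          positivity
        have s2 : ((1 - θ) ^ 2 * (4 / 9) * e2r⁻¹) *
            ((δ + a + b) ^ (p - 2) * (a ^ 2 + b ^ 2 - 2 * e)) ≤
            ((1 - θ) ^ 2 * (4 / 9) * e2r⁻¹) * ((e2r * (δ + a) ^ (p - 2)) * (9 / 4 * a ^ 2)) :=
          mul_le_mul_of_nonneg_left s1 (by positivity)
        calc ((1 - θ) ^ 2 * (4 / 9) * e2r⁻¹) *
              ((δ + a + b) ^ (p - 2) * (a ^ 2 + b ^ 2 - 2 * e))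
            ≤ ((1 - θ) ^ 2 * (4 / 9) * e2r⁻¹) *
              ((e2r * (δ + a) ^ (p - 2)) * (9 / 4 * a ^ 2)) := s2
          _ = (1 - θ) ^ 2 * (e2r⁻¹ * e2r) * ((δ + a) ^ (p - 2) * a ^ 2) := by ring
          _ = (1 - θ) ^ 2 * ((δ + a) ^ (p - 2) * a ^ 2) := by
              rw [inv_mul_cancel₀ h2r0.ne']; ring
      calc min c1 c2 * ((δ + a + b) ^ (p - 2) * (a ^ 2 + b ^ 2 - 2 * e))
          ≤ c2 * ((δ + a + b) ^ (p - 2) * (a ^ 2 + b ^ 2 - 2 * e)) := by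
            apply mul_le_mul_of_nonneg_right (min_le_right _ _)
            have : 0 ≤ a ^ 2 + b ^ 2 - 2 * e := by linarith [he1, sq_nonneg (a - b)]
            positivity
        _ ≤ (1 - θ) ^ 2 * fa ^ 2 := key
        _ ≤ _ := hDlow
    · -- upper
      have key : 4 * fa ^ 2 ≤ C2 * ((δ + a + b) ^ (p - 2) * (a ^ 2 + b ^ 2 - 2 * e)) := by
        rw [hfa2, hC2def]
        have s1 : (δ + a) ^ (p - 2) * a ^ 2 ≤
            (e2r * (δ + a + b) ^ (p - 2)) * (4 * (a ^ 2 + b ^ 2 - 2 * e)) := by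
          apply mul_le_mul hKcmp2 (by linarith [he1, sq_nonneg (a - b)]) (by positivity) (by positivity)
        calc 4 * ((δ + a) ^ (p - 2) * a ^ 2)
            ≤ 4 * ((e2r * (δ + a + b) ^ (p - 2)) * (4 * (a ^ 2 + b ^ 2 - 2 * e))) := by
              linarith [mul_le_mul_of_nonneg_left s1 (by norm_num : (0:ℝ) ≤ 4)]
          _ = 16 * e2r * ((δ + a + b) ^ (p - 2) * (a ^ 2 + b ^ 2 - 2 * e)) := by ring
      calc ((δ + a) ^ q) ^ 2 * a ^ 2 - 2 * ((δ + a) ^ q * (δ + b) ^ q) * e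
            + ((δ + b) ^ q) ^ 2 * b ^ 2 ≤ 4 * fa ^ 2 := hDup
        _ ≤ C2 * ((δ + a + b) ^ (p - 2) * (a ^ 2 + b ^ 2 - 2 * e)) := key
        _ ≤ max C1 C2 * ((δ + a + b) ^ (p - 2) * (a ^ 2 + b ^ 2 - 2 * e)) := by
            apply mul_le_mul_of_nonneg_right (le_max_right _ _)
            have : 0 ≤ a ^ 2 + b ^ 2 - 2 * e := by linarith [he1, sq_nonneg (a - b)]
            positivity
  · -- CASE 1 : a/2 < b ≤ a
    have hb0 : 0 < b := by linarith
    have hdb : 0 < δ + b := by linarith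
    -- cross term comparison
    have hu0 : (0:ℝ) < (δ + a) * (δ + b) := by positivity
    have hv0 : (0:ℝ) < (δ + a + b) ^ 2 := by positivity
    have huv1 : (δ + a + b) ^ 2 ≤ 8 * ((δ + a) * (δ + b)) := by
      have k1 : 0 ≤ a * (2*b - a) := mul_nonneg ha (by linarith)
      have k2 : 0 ≤ b * (a - b) := mul_nonneg hb0.le (by linarith)
      have k3 : 0 ≤ δ * a := mul_nonneg hδ ha
      have k4 : 0 ≤ δ * b := mul_nonneg hδ hb0.le
      have k5 : 0 ≤ δ * δ := mul_self_nonneg δ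
      have k6 : 0 ≤ a * b := mul_nonneg ha hb0.le
      linarith [k1, k2, k3, k4, k5, k6]
    have huv2 : (δ + a) * (δ + b) ≤ 8 * (δ + a + b) ^ 2 := by
      have k3 : 0 ≤ δ * a := mul_nonneg hδ ha
      have k4 : 0 ≤ δ * b := mul_nonneg hδ hb0.le
      have k5 : 0 ≤ δ * δ := mul_self_nonneg δ
      have k6 : 0 ≤ a * b := mul_nonneg ha hb0.le
      linarith [k3, k4, k5, k6, sq_nonneg a, sq_nonneg b]
    have hKsq : ((δ + a + b) ^ 2) ^ q = (δ + a + b) ^ (p - 2) := by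
      rw [← Real.rpow_two, ← Real.rpow_mul (by linarith : (0:ℝ) ≤ δ + a + b)]
      congr 1; rw [hqdef]; ring
    have hABmul : ((δ + a) * (δ + b)) ^ q = (δ + a) ^ q * (δ + b) ^ q :=
      Real.mul_rpow hda.le hdb.le
    have hcr1 : (δ + a + b) ^ (p - 2) ≤ e8q * ((δ + a) ^ q * (δ + b) ^ q) := by
      rw [← hKsq, ← hABmul, he8q]
      exact rpow_comp q hu0 hv0 (by norm_num) huv1 huv2
    have hcr2 : (δ + a) ^ q * (δ + b) ^ q ≤ e8q * (δ + a + b) ^ (p - 2) := by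
      rw [← hKsq, ← hABmul, he8q]
      exact rpow_comp q hv0 hu0 (by norm_num) huv2 huv1
    have hcr1' : e8q⁻¹ * (δ + a + b) ^ (p - 2) ≤ (δ + a) ^ q * (δ + b) ^ q := by
      rw [inv_mul_le_iff₀ h8q0]; exact hcr1
    -- scalar term comparison via MVT
    have hS : ∃ m : ℝ, cmin * (e2q⁻¹ * (δ + a) ^ q) ≤ m ∧
        m ≤ cmax * (e2q * (δ + a) ^ q) ∧
        (δ + a) ^ q * a - (δ + b) ^ q * b = m * (a - b) := by
      rcases eq_or_lt_of_le hba with hab | hab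
      · -- b = a : take m between the bounds, e.g. cmin * (e2q⁻¹ * (δ+a)^q)
        refine ⟨cmin * (e2q⁻¹ * (δ + a) ^ q), le_refl _, ?_, ?_⟩
        · have h1 : cmin ≤ cmax := min_le_of_left_le (le_max_left _ _)
          have h2 : e2q⁻¹ ≤ e2q := by
            rw [he2q, ← Real.rpow_neg (by norm_num)]
            apply Real.rpow_le_rpow_left_iff (by norm_num : (1:ℝ) < 2) |>.mpr
            have := abs_nonneg q; linarith
          have h3 : (0:ℝ) ≤ (δ + a) ^ q := Real.rpow_nonneg hda.le _
          apply mul_le_mul h1 (mul_le_mul_of_nonneg_right h2 h3) (by positivity) hcmax0.le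
        · rw [hab]; ring
      · obtain ⟨m, hm1, hm2, hm3⟩ := slope_bound hp hδ hb0 hab (by linarith)
        refine ⟨m, ?_, ?_, hm3⟩
        · rw [← h2qe]; exact hm1
        · exact hm2
    obtain ⟨m, hm1, hm2, hm3⟩ := hS
    have hm0 : 0 ≤ m := le_trans (by positivity) hm1
    -- S = m^2 (a-b)^2 bounds
    have hSlow : cmin ^ 2 * (e2q⁻¹) ^ 2 * e2r⁻¹ *
        ((δ + a + b) ^ (p - 2) * (a - b) ^ 2) ≤
        ((δ + a) ^ q * a - (δ + b) ^ q * b) ^ 2 := by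
      rw [hm3, mul_pow]
      have hmx : (cmin * (e2q⁻¹ * (δ + a) ^ q)) ^ 2 ≤ m ^ 2 :=
        pow_le_pow_left₀ (by positivity) hm1 2
      have hKm : e2r⁻¹ * (δ + a + b) ^ (p - 2) ≤ ((δ + a) ^ q) ^ 2 := by
        rw [hsqA, inv_mul_le_iff₀ h2r0]; exact hKcmp1
      have expand : (cmin * (e2q⁻¹ * (δ + a) ^ q)) ^ 2 =
          cmin ^ 2 * (e2q⁻¹) ^ 2 * ((δ + a) ^ q) ^ 2 := by ring
      have step : cmin ^ 2 * (e2q⁻¹) ^ 2 * (e2r⁻¹ * (δ + a + b) ^ (p - 2)) ≤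
          cmin ^ 2 * (e2q⁻¹) ^ 2 * ((δ + a) ^ q) ^ 2 :=
        mul_le_mul_of_nonneg_left hKm (by positivity)
      have final : cmin ^ 2 * (e2q⁻¹) ^ 2 * (e2r⁻¹ * (δ + a + b) ^ (p - 2)) * (a - b) ^ 2 ≤
          m ^ 2 * (a - b) ^ 2 := by
        apply mul_le_mul_of_nonneg_right _ (sq_nonneg _)
        calc cmin ^ 2 * (e2q⁻¹) ^ 2 * (e2r⁻¹ * (δ + a + b) ^ (p - 2))
            ≤ cmin ^ 2 * (e2q⁻¹) ^ 2 * ((δ + a) ^ q) ^ 2 := step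
          _ = (cmin * (e2q⁻¹ * (δ + a) ^ q)) ^ 2 := expand.symm
          _ ≤ m ^ 2 := hmx
      calc cmin ^ 2 * (e2q⁻¹) ^ 2 * e2r⁻¹ * ((δ + a + b) ^ (p - 2) * (a - b) ^ 2)
          = cmin ^ 2 * (e2q⁻¹) ^ 2 * (e2r⁻¹ * (δ + a + b) ^ (p - 2)) * (a - b) ^ 2 := by
            ring
        _ ≤ m ^ 2 * (a - b) ^ 2 := final
    have hSup : ((δ + a) ^ q * a - (δ + b) ^ q * b) ^ 2 ≤
        cmax ^ 2 * e2q ^ 2 * e2r * ((δ + a + b) ^ (p - 2) * (a - b) ^ 2) := by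
      rw [hm3, mul_pow]
      have hmx : m ^ 2 ≤ (cmax * (e2q * (δ + a) ^ q)) ^ 2 :=
        pow_le_pow_left₀ hm0 hm2 2
      have hKm : ((δ + a) ^ q) ^ 2 ≤ e2r * (δ + a + b) ^ (p - 2) := by
        rw [hsqA]; exact hKcmp2
      have final : m ^ 2 ≤ cmax ^ 2 * e2q ^ 2 * (e2r * (δ + a + b) ^ (p - 2)) := by
        calc m ^ 2 ≤ (cmax * (e2q * (δ + a) ^ q)) ^ 2 := hmx
          _ = cmax ^ 2 * e2q ^ 2 * ((δ + a) ^ q) ^ 2 := by ring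
          _ ≤ cmax ^ 2 * e2q ^ 2 * (e2r * (δ + a + b) ^ (p - 2)) :=
              mul_le_mul_of_nonneg_left hKm (by positivity)
      calc m ^ 2 * (a - b) ^ 2
          ≤ cmax ^ 2 * e2q ^ 2 * (e2r * (δ + a + b) ^ (p - 2)) * (a - b) ^ 2 :=
            mul_le_mul_of_nonneg_right final (sq_nonneg _)
        _ = cmax ^ 2 * e2q ^ 2 * e2r * ((δ + a + b) ^ (p - 2) * (a - b) ^ 2) := by ring
    -- assemble
    have hv : 0 ≤ a * b - e := by linarith
    have hDsum : ((δ + a) ^ q) ^ 2 * a ^ 2 - 2 * ((δ + a) ^ q * (δ + b) ^ q) * e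
          + ((δ + b) ^ q) ^ 2 * b ^ 2 =
        ((δ + a) ^ q * a - (δ + b) ^ q * b) ^ 2
          + 2 * (((δ + a) ^ q * (δ + b) ^ q) * (a * b - e)) := by ring
    have hNsum : a ^ 2 + b ^ 2 - 2 * e = (a - b) ^ 2 + 2 * (a * b - e) := by ring
    rw [hDsum, hNsum]
    constructor
    · apply le_trans (mul_le_mul_of_nonneg_right (min_le_left c1 c2) _)
      · exact combine_low (min_le_left _ _) (min_le_right _ _) hc10.le hK0 (sq_nonneg _)
          hv hSlow hcr1'
      · have h0 : (0:ℝ) ≤ (a - b) ^ 2 + 2 * (a * b - e) := by positivity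
        positivity
    · apply le_trans
        (combine_up (le_max_left _ _) (le_max_right _ _) (by positivity) h8q0.le hK0
          (sq_nonneg _) hv hSup hcr2)
      apply mul_le_mul_of_nonneg_right (le_max_left C1 C2 |>.trans (le_refl _))
      have h0 : (0:ℝ) ≤ (a - b) ^ 2 + 2 * (a * b - e) := by positivity
      positivity

set_option maxHeartbeats 1000000 in
lemma int_comp {p : ℝ} (hp : 1 < p) {κ t : ℝ} (hκ : 0 ≤ κ) (ht : 0 ≤ t) :
    min (1/2) (1/p) * ((κ + t) ^ (p - 2) * t ^ 2) ≤
      (∫ s in (0:ℝ)..t, (κ + s) ^ (p - 2) * s) ∧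
    (∫ s in (0:ℝ)..t, (κ + s) ^ (p - 2) * s) ≤
      max (1/2) (1/p) * ((κ + t) ^ (p - 2) * t ^ 2) := by
  have hp0 : 0 < p := by linarith
  rcases eq_or_lt_of_le ht with ht0 | ht0
  · rw [← ht0]
    simp
  rcases eq_or_lt_of_le hκ with hκ0 | hκ0
  · -- κ = 0 : the integral is exactly t^p / p
    have hae : ∀ s ∈ Set.uIoc (0:ℝ) t, (κ + s) ^ (p - 2) * s = s ^ (p - 1) := by
      intro s hs
      rw [Set.uIoc_of_le ht] at hs
      have hs0 : 0 < s := hs.1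
      rw [← hκ0, zero_add, ← Real.rpow_add_one hs0.ne' (p - 2)]
      congr 1; ring
    have hI : (∫ s in (0:ℝ)..t, (κ + s) ^ (p - 2) * s) = ∫ s in (0:ℝ)..t, s ^ (p - 1) :=
      intervalIntegral.integral_congr_ae
        (MeasureTheory.ae_of_all _ hae)
    have hI2 : (∫ s in (0:ℝ)..t, s ^ (p - 1)) = t ^ p / p := by
      rw [integral_rpow (Or.inl (by linarith))]
      rw [Real.zero_rpow (by linarith : p - 1 + 1 ≠ 0)]
      norm_num [show p - 1 + 1 = p by ring]
    have hval : (κ + t) ^ (p - 2) * t ^ 2 = t ^ p := by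
      rw [← hκ0, zero_add, ← Real.rpow_two, ← Real.rpow_add ht0]
      congr 1; ring
    rw [hI, hI2, hval]
    have htp : 0 ≤ t ^ p := Real.rpow_nonneg ht _
    constructor
    · calc min (1/2) (1/p) * t ^ p ≤ (1/p) * t ^ p :=
          mul_le_mul_of_nonneg_right (min_le_right _ _) htp
        _ = t ^ p / p := by ring
    · calc t ^ p / p = (1/p) * t ^ p := by ring
        _ ≤ max (1/2) (1/p) * t ^ p :=
          mul_le_mul_of_nonneg_right (le_max_right _ _) htp
  · -- κ > 0
    have hκt : 0 < κ + t := by linarith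
    have htp2 : (0:ℝ) < t ^ (p - 2) := Real.rpow_pos_of_pos ht0 _
    set c2 : ℝ := (κ + t) ^ (p - 2) * (t ^ (p - 2))⁻¹ with hc2
    -- integrability
    have hg : ContinuousOn (fun s : ℝ => (κ + s) ^ (p - 2) * s) (Set.uIcc 0 t) := by
      apply ContinuousOn.mul _ continuousOn_id
      apply ContinuousOn.rpow_const (by fun_prop)
      intro s hs
      rw [Set.uIcc_of_le ht] at hs
      exact Or.inl (by have := hs.1; positivity)
    have hgi : IntervalIntegrable (fun s : ℝ => (κ + s) ^ (p - 2) * s)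
        MeasureTheory.volume 0 t := hg.intervalIntegrable
    have hh1i : IntervalIntegrable (fun s : ℝ => (κ + t) ^ (p - 2) * s)
        MeasureTheory.volume 0 t := (continuous_const.mul continuous_id).intervalIntegrable _ _
    have hh2 : ContinuousOn (fun s : ℝ => c2 * s ^ (p - 1)) (Set.uIcc 0 t) := by
      apply ContinuousOn.mul continuousOn_const
      apply ContinuousOn.rpow_const continuousOn_id
      intro s _
      exact Or.inr (by linarith)
    have hh2i : IntervalIntegrable (fun s : ℝ => c2 * s ^ (p - 1))
        MeasureTheory.volume 0 t := hh2.intervalIntegrable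
    -- values of the comparison integrals
    have hI1 : (∫ s in (0:ℝ)..t, (κ + t) ^ (p - 2) * s) = (κ + t) ^ (p - 2) * (t ^ 2 / 2) := by
      rw [intervalIntegral.integral_const_mul, integral_id]
      norm_num
    have hI2 : (∫ s in (0:ℝ)..t, c2 * s ^ (p - 1)) = (1/p) * ((κ + t) ^ (p - 2) * t ^ 2) := by
      rw [intervalIntegral.integral_const_mul, integral_rpow (Or.inl (by linarith))]
      rw [Real.zero_rpow (by linarith : p - 1 + 1 ≠ 0)]
      have hsplit : t ^ (p - 1 + 1) = t ^ (p - 2) * t ^ 2 := by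
        rw [← Real.rpow_two, ← Real.rpow_add ht0]
        congr 1; ring
      rw [hsplit, hc2, show p - 1 + 1 = p by ring]
      field_simp
      ring
    -- pointwise comparisons
    have key_le : ∀ s ∈ Set.Icc (0:ℝ) t, (κ + t) * s ≤ (κ + s) * t := by
      intro s hs
      nlinarith [hs.1, hs.2, mul_nonneg hκ (sub_nonneg.mpr hs.2)]
    rcases le_or_gt 2 p with hp2 | hp2
    · -- p ≥ 2
      have hup : ∀ s ∈ Set.Icc (0:ℝ) t, (κ + s) ^ (p - 2) * s ≤ (κ + t) ^ (p - 2) * s := by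
        intro s hs
        apply mul_le_mul_of_nonneg_right _ hs.1
        exact Real.rpow_le_rpow (by linarith [hs.1]) (by linarith [hs.2]) (by linarith)
      have hlow : ∀ s ∈ Set.Icc (0:ℝ) t, c2 * s ^ (p - 1) ≤ (κ + s) ^ (p - 2) * s := by
        intro s hs
        rcases eq_or_lt_of_le hs.1 with hs0 | hs0
        · rw [← hs0, Real.zero_rpow (by linarith : p - 1 ≠ 0)]
          simp
        · have hkey : ((κ + t) * s) ^ (p - 2) ≤ ((κ + s) * t) ^ (p - 2) :=
            Real.rpow_le_rpow (by positivity) (key_le s hs) (by linarith)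
          rw [Real.mul_rpow hκt.le hs0.le, Real.mul_rpow (by positivity) ht0.le] at hkey
          have hmul := mul_le_mul_of_nonneg_right hkey
            (by positivity : (0:ℝ) ≤ (t ^ (p - 2))⁻¹ * s)
          calc c2 * s ^ (p - 1)
              = (κ + t) ^ (p - 2) * s ^ (p - 2) * ((t ^ (p - 2))⁻¹ * s) := by
                rw [hc2, show p - 1 = (p - 2) + 1 by ring, Real.rpow_add_one hs0.ne']
                ring
            _ ≤ (κ + s) ^ (p - 2) * t ^ (p - 2) * ((t ^ (p - 2))⁻¹ * s) := hmul
            _ = (κ + s) ^ (p - 2) * (t ^ (p - 2) * (t ^ (p - 2))⁻¹) * s := by ring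
            _ = (κ + s) ^ (p - 2) * s := by rw [mul_inv_cancel₀ htp2.ne']; ring
      constructor
      · calc min (1/2) (1/p) * ((κ + t) ^ (p - 2) * t ^ 2)
            ≤ (1/p) * ((κ + t) ^ (p - 2) * t ^ 2) :=
              mul_le_mul_of_nonneg_right (min_le_right _ _) (by positivity)
          _ = ∫ s in (0:ℝ)..t, c2 * s ^ (p - 1) := hI2.symm
          _ ≤ ∫ s in (0:ℝ)..t, (κ + s) ^ (p - 2) * s :=
              intervalIntegral.integral_mono_on ht hh2i hgi hlow
      · calc (∫ s in (0:ℝ)..t, (κ + s) ^ (p - 2) * s)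
            ≤ ∫ s in (0:ℝ)..t, (κ + t) ^ (p - 2) * s :=
              intervalIntegral.integral_mono_on ht hgi hh1i hup
          _ = (κ + t) ^ (p - 2) * (t ^ 2 / 2) := hI1
          _ = (1/2) * ((κ + t) ^ (p - 2) * t ^ 2) := by ring
          _ ≤ max (1/2) (1/p) * ((κ + t) ^ (p - 2) * t ^ 2) :=
              mul_le_mul_of_nonneg_right (le_max_left _ _) (by positivity)
    · -- p < 2
      have hlow : ∀ s ∈ Set.Icc (0:ℝ) t, (κ + t) ^ (p - 2) * s ≤ (κ + s) ^ (p - 2) * s := by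
        intro s hs
        apply mul_le_mul_of_nonneg_right _ hs.1
        exact Real.rpow_le_rpow_of_nonpos (by linarith [hs.1]) (by linarith [hs.2])
          (by linarith)
      have hup : ∀ s ∈ Set.Icc (0:ℝ) t, (κ + s) ^ (p - 2) * s ≤ c2 * s ^ (p - 1) := by
        intro s hs
        rcases eq_or_lt_of_le hs.1 with hs0 | hs0
        · rw [← hs0, Real.zero_rpow (by linarith : p - 1 ≠ 0)]
          simp
        · have hkey : ((κ + s) * t) ^ (p - 2) ≤ ((κ + t) * s) ^ (p - 2) :=
            Real.rpow_le_rpow_of_nonpos (by positivity) (key_le s hs) (by linarith)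
          rw [Real.mul_rpow hκt.le hs0.le, Real.mul_rpow (by positivity) ht0.le] at hkey
          have hmul := mul_le_mul_of_nonneg_right hkey
            (by positivity : (0:ℝ) ≤ (t ^ (p - 2))⁻¹ * s)
          calc (κ + s) ^ (p - 2) * s
              = (κ + s) ^ (p - 2) * (t ^ (p - 2) * (t ^ (p - 2))⁻¹) * s := by
                rw [mul_inv_cancel₀ htp2.ne']; ring
            _ = (κ + s) ^ (p - 2) * t ^ (p - 2) * ((t ^ (p - 2))⁻¹ * s) := by ring
            _ ≤ (κ + t) ^ (p - 2) * s ^ (p - 2) * ((t ^ (p - 2))⁻¹ * s) := hmul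
            _ = c2 * s ^ (p - 1) := by
                rw [hc2, show p - 1 = (p - 2) + 1 by ring, Real.rpow_add_one hs0.ne']
                ring
      constructor
      · calc min (1/2) (1/p) * ((κ + t) ^ (p - 2) * t ^ 2)
            ≤ (1/2) * ((κ + t) ^ (p - 2) * t ^ 2) :=
              mul_le_mul_of_nonneg_right (min_le_left _ _) (by positivity)
          _ = (κ + t) ^ (p - 2) * (t ^ 2 / 2) := by ring
          _ = ∫ s in (0:ℝ)..t, (κ + t) ^ (p - 2) * s := hI1.symm
          _ ≤ ∫ s in (0:ℝ)..t, (κ + s) ^ (p - 2) * s :=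
              intervalIntegral.integral_mono_on ht hh1i hgi hlow
      · calc (∫ s in (0:ℝ)..t, (κ + s) ^ (p - 2) * s)
            ≤ ∫ s in (0:ℝ)..t, c2 * s ^ (p - 1) :=
              intervalIntegral.integral_mono_on ht hgi hh2i hup
          _ = (1/p) * ((κ + t) ^ (p - 2) * t ^ 2) := hI2
          _ ≤ max (1/2) (1/p) * ((κ + t) ^ (p - 2) * t ^ 2) :=
              mul_le_mul_of_nonneg_right (le_max_right _ _) (by positivity)

lemma core_sym (p : ℝ) (hp : 1 < p) :
    ∃ c : ℝ, 0 < c ∧ ∃ C : ℝ, 0 < C ∧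
      ∀ δ a b e : ℝ, 0 ≤ δ → 0 ≤ a → 0 ≤ b → |e| ≤ a * b →
        c * ((δ + a + b) ^ (p - 2) * (a ^ 2 + b ^ 2 - 2 * e)) ≤
          ((δ + a) ^ ((p - 2) / 2)) ^ 2 * a ^ 2
            - 2 * ((δ + a) ^ ((p - 2) / 2) * (δ + b) ^ ((p - 2) / 2)) * e
            + ((δ + b) ^ ((p - 2) / 2)) ^ 2 * b ^ 2 ∧
        ((δ + a) ^ ((p - 2) / 2)) ^ 2 * a ^ 2
            - 2 * ((δ + a) ^ ((p - 2) / 2) * (δ + b) ^ ((p - 2) / 2)) * e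
            + ((δ + b) ^ ((p - 2) / 2)) ^ 2 * b ^ 2
          ≤ C * ((δ + a + b) ^ (p - 2) * (a ^ 2 + b ^ 2 - 2 * e)) := by
  obtain ⟨c, hc, C, hC, h⟩ := core_wlog p hp
  refine ⟨c, hc, C, hC, fun δ a b e hδ ha hb he => ?_⟩
  rcases le_total b a with h1 | h1
  · exact h δ a b e hδ hb h1 he
  · have h2 := h δ b a e hδ ha h1 (by rwa [mul_comm])
    have hcomm : δ + b + a = δ + a + b := by ring
    rw [hcomm] at h2
    constructor
    · calc c * ((δ + a + b) ^ (p - 2) * (a ^ 2 + b ^ 2 - 2 * e))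
          = c * ((δ + a + b) ^ (p - 2) * (b ^ 2 + a ^ 2 - 2 * e)) := by ring
        _ ≤ ((δ + b) ^ ((p - 2) / 2)) ^ 2 * b ^ 2
            - 2 * ((δ + b) ^ ((p - 2) / 2) * (δ + a) ^ ((p - 2) / 2)) * e
            + ((δ + a) ^ ((p - 2) / 2)) ^ 2 * a ^ 2 := h2.1
        _ = ((δ + a) ^ ((p - 2) / 2)) ^ 2 * a ^ 2
            - 2 * ((δ + a) ^ ((p - 2) / 2) * (δ + b) ^ ((p - 2) / 2)) * e
            + ((δ + b) ^ ((p - 2) / 2)) ^ 2 * b ^ 2 := by ring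
    · calc ((δ + a) ^ ((p - 2) / 2)) ^ 2 * a ^ 2
            - 2 * ((δ + a) ^ ((p - 2) / 2) * (δ + b) ^ ((p - 2) / 2)) * e
            + ((δ + b) ^ ((p - 2) / 2)) ^ 2 * b ^ 2
          = ((δ + b) ^ ((p - 2) / 2)) ^ 2 * b ^ 2
            - 2 * ((δ + b) ^ ((p - 2) / 2) * (δ + a) ^ ((p - 2) / 2)) * e
            + ((δ + a) ^ ((p - 2) / 2)) ^ 2 * a ^ 2 := by ring
        _ ≤ C * ((δ + a + b) ^ (p - 2) * (b ^ 2 + a ^ 2 - 2 * e)) := h2.2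
        _ = C * ((δ + a + b) ^ (p - 2) * (a ^ 2 + b ^ 2 - 2 * e)) := by ring

lemma mdot_self_nonneg {d : ℕ} (A : Matrix (Fin d) (Fin d) ℝ) : 0 ≤ mdot A A :=
  Finset.sum_nonneg fun _ _ => Finset.sum_nonneg fun _ _ => mul_self_nonneg _

lemma mnorm_sq {d : ℕ} (A : Matrix (Fin d) (Fin d) ℝ) : mnorm A ^ 2 = mdot A A :=
  Real.sq_sqrt (mdot_self_nonneg A)

lemma mnorm_nonneg {d : ℕ} (A : Matrix (Fin d) (Fin d) ℝ) : 0 ≤ mnorm A :=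
  Real.sqrt_nonneg _

lemma mdot_expand {d : ℕ} (A B : ℝ) (x y : Matrix (Fin d) (Fin d) ℝ) :
    mdot (A • x - B • y) (A • x - B • y) =
      A ^ 2 * mdot x x - 2 * (A * B) * mdot x y + B ^ 2 * mdot y y := by
  simp only [mdot, Matrix.sub_apply, Matrix.smul_apply, smul_eq_mul, Finset.mul_sum,
    ← Finset.sum_add_distrib, ← Finset.sum_sub_distrib]
  exact Finset.sum_congr rfl fun i _ => Finset.sum_congr rfl fun j _ => by ring

lemma mdot_prod {d : ℕ} (x y : Matrix (Fin d) (Fin d) ℝ) :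
    mdot x y = ∑ z : Fin d × Fin d, x z.1 z.2 * y z.1 z.2 := by
  rw [mdot]
  exact (Fintype.sum_prod_type (f := fun z : Fin d × Fin d => x z.1 z.2 * y z.1 z.2)).symm

lemma mdot_cs {d : ℕ} (x y : Matrix (Fin d) (Fin d) ℝ) :
    |mdot x y| ≤ mnorm x * mnorm y := by
  have h := Finset.sum_mul_sq_le_sq_mul_sq Finset.univ
    (fun z : Fin d × Fin d => x z.1 z.2) (fun z : Fin d × Fin d => y z.1 z.2)
  have e1 : ∑ z : Fin d × Fin d, x z.1 z.2 * y z.1 z.2 = mdot x y := (mdot_prod x y).symm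
  have e2 : ∑ z : Fin d × Fin d, (x z.1 z.2) ^ 2 = mdot x x := by
    rw [mdot_prod x x]; exact Finset.sum_congr rfl fun z _ => sq (x z.1 z.2) ▸ rfl
  have e3 : ∑ z : Fin d × Fin d, (y z.1 z.2) ^ 2 = mdot y y := by
    rw [mdot_prod y y]; exact Finset.sum_congr rfl fun z _ => sq (y z.1 z.2) ▸ rfl
  rw [e1, e2, e3] at h
  have h2 : (mdot x y) ^ 2 ≤ (mnorm x * mnorm y) ^ 2 := by
    rw [mul_pow, mnorm_sq, mnorm_sq]; exact h
  calc |mdot x y| = Real.sqrt ((mdot x y) ^ 2) := (Real.sqrt_sq_eq_abs _).symm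
    _ ≤ Real.sqrt ((mnorm x * mnorm y) ^ 2) := Real.sqrt_le_sqrt h2
    _ = mnorm x * mnorm y := Real.sqrt_sq (mul_nonneg (mnorm_nonneg x) (mnorm_nonneg y))

set_option maxHeartbeats 1000000 in
/-- There are constants `c, C > 0` depending only on `p > 1` such that for all `δ ≥ 0`,
all `d ≥ 1` and all real `d×d` matrices `P, Q`:
`c * φ_{|P^sym|}(|P^sym - Q^sym|) ≤ |F(P) - F(Q)|² ≤ C * φ_{|P^sym|}(|P^sym - Q^sym|)`,
where `φ_a(t) = ∫₀ᵗ (δ+a+s)^(p-2) * s ds` is the shifted function with `a = |P^sym|`. -/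
theorem stmt8 (p : ℝ) (hp : 1 < p) :
    ∃ c : ℝ, 0 < c ∧ ∃ C : ℝ, 0 < C ∧
      ∀ δ : ℝ, 0 ≤ δ → ∀ d : ℕ, 1 ≤ d → ∀ P Q : Matrix (Fin d) (Fin d) ℝ,
        c * (∫ s in (0:ℝ)..(mnorm (msym P - msym Q)),
              (δ + mnorm (msym P) + s) ^ (p - 2) * s)
            ≤ mnorm (Fmap p δ P - Fmap p δ Q) ^ 2 ∧
        mnorm (Fmap p δ P - Fmap p δ Q) ^ 2
            ≤ C * ∫ s in (0:ℝ)..(mnorm (msym P - msym Q)),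
                (δ + mnorm (msym P) + s) ^ (p - 2) * s := by
  obtain ⟨c0, hc0, C0, hC0, hcore⟩ := core_sym p hp
  have hp0 : (0:ℝ) < p := by linarith
  have hσ0 : (0:ℝ) < (2:ℝ) ^ |p - 2| := Real.rpow_pos_of_pos (by norm_num) _
  set σ : ℝ := (2:ℝ) ^ |p - 2| with hσdef
  set ci : ℝ := min (1/2) (1/p) with hcidef
  set Ci : ℝ := max (1/2) (1/p) with hCidef
  have hci0 : (0:ℝ) < ci := lt_min (by norm_num) (by positivity)
  have hCi0 : (0:ℝ) < Ci := lt_of_lt_of_le (by norm_num : (0:ℝ) < 1/2) (le_max_left _ _)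
  refine ⟨c0 / (Ci * σ), by positivity, C0 * σ / ci, by positivity,
    fun δ hδ d hd P Q => ?_⟩
  set x := msym P with hxdef
  set y := msym Q with hydef
  set a := mnorm x with hadef
  set b := mnorm y with hbdef
  set e := mdot x y with hedef
  set t := mnorm (x - y) with htdef
  have ha : 0 ≤ a := mnorm_nonneg x
  have hb : 0 ≤ b := mnorm_nonneg y
  have ht : 0 ≤ t := mnorm_nonneg _
  have hcs : |e| ≤ a * b := mdot_cs x y
  obtain ⟨he2, he1⟩ := abs_le.mp hcs
  have ht2 : t ^ 2 = a ^ 2 + b ^ 2 - 2 * e := by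
    have h1 : x - y = (1:ℝ) • x - (1:ℝ) • y := by rw [one_smul, one_smul]
    have h2 : mnorm (x - y) ^ 2 =
        mnorm x ^ 2 + mnorm y ^ 2 - 2 * mdot x y := by
      rw [mnorm_sq, h1, mdot_expand, ← mnorm_sq x, ← mnorm_sq y]; ring
    exact h2
  have hFD : mnorm (Fmap p δ P - Fmap p δ Q) ^ 2 =
      ((δ + a) ^ ((p - 2) / 2)) ^ 2 * a ^ 2
        - 2 * ((δ + a) ^ ((p - 2) / 2) * (δ + b) ^ ((p - 2) / 2)) * e
        + ((δ + b) ^ ((p - 2) / 2)) ^ 2 * b ^ 2 := by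
    have hF : Fmap p δ P - Fmap p δ Q =
        ((δ + a) ^ ((p - 2) / 2)) • x - ((δ + b) ^ ((p - 2) / 2)) • y := rfl
    rw [hF, mnorm_sq, mdot_expand, ← mnorm_sq x, ← mnorm_sq y]
  have h1 : (b - a) ^ 2 ≤ t ^ 2 := by rw [ht2]; linarith [he1]
  have hbat : b ≤ a + t := by nlinarith [h1, ht]
  have h2' : t ^ 2 ≤ (a + b) ^ 2 := by rw [ht2]; linarith [he2]
  have htab : t ≤ a + b := by nlinarith [h2', ht, add_nonneg ha hb]
  rw [hFD]
  by_cases hdeg : δ + a + t = 0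
  · have hδ0 : δ = 0 := by linarith
    have ha0 : a = 0 := by linarith
    have ht0 : t = 0 := by linarith
    have hb0 : b = 0 := by linarith [hbat]
    have he0 : e = 0 := by
      have h3 : |e| ≤ 0 := by rw [ha0, hb0] at hcs; simpa using hcs
      exact abs_eq_zero.mp (le_antisymm h3 (abs_nonneg e))
    rw [ht0, ha0, hb0, he0]
    norm_num [intervalIntegral.integral_same]
  · have hpos : (0:ℝ) < δ + a + t := lt_of_le_of_ne (by positivity) (Ne.symm hdeg)
    have hab0 : (0:ℝ) < δ + a + b := by
      rcases lt_or_ge 0 (δ + a + b) with h | h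
      · exact h
      · exfalso
        linarith [htab, hpos]
    obtain ⟨hlow, hup⟩ := hcore δ a b e hδ ha hb hcs
    rw [← ht2] at hlow hup
    obtain ⟨hil, hiu⟩ := int_comp hp (by positivity : (0:ℝ) ≤ δ + a) ht
    have hsh1 : (δ + a + b) ^ (p - 2) ≤ σ * (δ + a + t) ^ (p - 2) :=
      rpow_comp (p - 2) hpos hab0 (by norm_num) (by linarith) (by linarith)
    have hsh2 : (δ + a + t) ^ (p - 2) ≤ σ * (δ + a + b) ^ (p - 2) :=
      rpow_comp (p - 2) hab0 hpos (by norm_num) (by linarith) (by linarith)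
    have hK0 : 0 ≤ (δ + a + b) ^ (p - 2) := Real.rpow_nonneg (by positivity) _
    have hK'0 : 0 ≤ (δ + a + t) ^ (p - 2) := Real.rpow_nonneg (by positivity) _
    have ht20 : (0:ℝ) ≤ t ^ 2 := sq_nonneg t
    constructor
    · -- lower bound
      have s2 : (δ + a + t) ^ (p - 2) * t ^ 2 ≤ σ * (δ + a + b) ^ (p - 2) * t ^ 2 :=
        mul_le_mul_of_nonneg_right hsh2 ht20
      have s3 : (∫ s in (0:ℝ)..t, (δ + a + s) ^ (p - 2) * s) ≤
          Ci * (σ * (δ + a + b) ^ (p - 2) * t ^ 2) :=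
        le_trans hiu (mul_le_mul_of_nonneg_left s2 hCi0.le)
      have s4 : c0 / (Ci * σ) * (∫ s in (0:ℝ)..t, (δ + a + s) ^ (p - 2) * s) ≤
          c0 / (Ci * σ) * (Ci * (σ * (δ + a + b) ^ (p - 2) * t ^ 2)) :=
        mul_le_mul_of_nonneg_left s3 (by positivity)
      have s5 : c0 / (Ci * σ) * (Ci * (σ * (δ + a + b) ^ (p - 2) * t ^ 2)) =
          c0 * ((δ + a + b) ^ (p - 2) * t ^ 2) := by
        field_simp
      calc c0 / (Ci * σ) * (∫ s in (0:ℝ)..t, (δ + a + s) ^ (p - 2) * s)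
          ≤ c0 / (Ci * σ) * (Ci * (σ * (δ + a + b) ^ (p - 2) * t ^ 2)) := s4
        _ = c0 * ((δ + a + b) ^ (p - 2) * t ^ 2) := s5
        _ ≤ _ := hlow
    · -- upper bound
      have s2 : (δ + a + b) ^ (p - 2) * t ^ 2 ≤ σ * (δ + a + t) ^ (p - 2) * t ^ 2 :=
        mul_le_mul_of_nonneg_right hsh1 ht20
      have s3 : ((δ + a) ^ ((p - 2) / 2)) ^ 2 * a ^ 2
            - 2 * ((δ + a) ^ ((p - 2) / 2) * (δ + b) ^ ((p - 2) / 2)) * e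
            + ((δ + b) ^ ((p - 2) / 2)) ^ 2 * b ^ 2 ≤
          C0 * (σ * (δ + a + t) ^ (p - 2) * t ^ 2) :=
        le_trans hup (mul_le_mul_of_nonneg_left s2 hC0.le)
      have s4 : C0 * (σ * (δ + a + t) ^ (p - 2) * t ^ 2) =
          C0 * σ / ci * (ci * ((δ + a + t) ^ (p - 2) * t ^ 2)) := by
        field_simp
      have s5 : C0 * σ / ci * (ci * ((δ + a + t) ^ (p - 2) * t ^ 2)) ≤
          C0 * σ / ci * (∫ s in (0:ℝ)..t, (δ + a + s) ^ (p - 2) * s) :=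
        mul_le_mul_of_nonneg_left hil (by positivity)
      calc ((δ + a) ^ ((p - 2) / 2)) ^ 2 * a ^ 2
            - 2 * ((δ + a) ^ ((p - 2) / 2) * (δ + b) ^ ((p - 2) / 2)) * e
            + ((δ + b) ^ ((p - 2) / 2)) ^ 2 * b ^ 2
          ≤ C0 * (σ * (δ + a + t) ^ (p - 2) * t ^ 2) := s3
        _ = C0 * σ / ci * (ci * ((δ + a + t) ^ (p - 2) * t ^ 2)) := s4
        _ ≤ C0 * σ / ci * (∫ s in (0:ℝ)..t, (δ + a + s) ^ (p - 2) * s) := s5
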